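/- Let p ∈ ℤ[x_1,...,x_n] with n ≥ 2 and let P ∈ ℂ[z_0,...,z_n] denote its homogenization viewed over ℂ. If the system z_i · ∂P/∂z_i = 0 (i = 0,...,n) has only the trivial solution over ℂ, then for every positive integer k, p(x_1^k,...,x_n^k) is not a product of two non-constant polynomials in ℤ[x_1,...,x_n]. -/

import Mathlib

open MvPolynomial

/-- The homogenization `P(z₀,…,zₙ) = z₀^{deg p} · p(z₁/z₀,…,zₙ/z₀)` of a polynomial
`p ∈ R[x₁,…,xₙ]`. -/
noncomputable def homogenize {R : Type*} [CommRing R] {n : ℕ}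
    (p : MvPolynomial (Fin n) R) : MvPolynomial (Fin (n + 1)) R :=
  ∑ m ∈ p.support,
    monomial (Finsupp.single 0 (p.totalDegree - m.sum fun _ e => e) +
      m.mapDomain Fin.succ) (p.coeff m)

section helpers

lemma fdeg_eq_sum {s : ℕ} (d : Fin s →₀ ℕ) : d.degree = ∑ i, d i := by
  rw [Finsupp.degree]
  exact Finset.sum_subset (Finset.subset_univ _) (by
    intro x _ hx
    simpa [Finsupp.mem_support_iff] using hx)

lemma fdeg_mapDomain_succ {s : ℕ} (m : Fin s →₀ ℕ) :
    (m.mapDomain Fin.succ).degree = m.degree := by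
  rw [fdeg_eq_sum, fdeg_eq_sum, Fin.sum_univ_succ]
  have h0 : (m.mapDomain Fin.succ) 0 = 0 := by
    apply Finsupp.mapDomain_notin_range
    simp [Fin.succ_ne_zero, eq_comm]
  rw [h0, zero_add]
  refine Finset.sum_congr rfl fun j _ => ?_
  rw [Finsupp.mapDomain_apply (Fin.succ_injective _)]

lemma fdeg_single {σ : Type*} (i : σ) (e : ℕ) : (Finsupp.single i e).degree = e := by
  classical
  rcases eq_or_ne e 0 with rfl | he
  · simp [map_zero]
  · rw [Finsupp.degree_apply, Finsupp.support_single_ne_zero _ he, Finset.sum_singleton,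
      Finsupp.single_eq_same]

lemma fdeg_add {σ : Type*} (a b : σ →₀ ℕ) : (a + b).degree = a.degree + b.degree := by
  classical
  simp only [Finsupp.degree_eq_weight_one, map_add]

lemma msum_eq_degree {s : ℕ} (m : Fin s →₀ ℕ) : (m.sum fun _ e => e) = m.degree := by
  rw [Finsupp.degree_apply, Finsupp.sum]

end helpers

section homogenizeLemmas

variable {R A : Type*} [CommRing R] [CommRing A] [Algebra R A] {n : ℕ}

lemma homogenize_isHomogeneous (p : MvPolynomial (Fin n) R) :
    (homogenize p).IsHomogeneous p.totalDegree := by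
  rw [← mem_homogeneousSubmodule, homogenize]
  refine Submodule.sum_mem _ fun m hm => ?_
  rw [mem_homogeneousSubmodule]
  refine isHomogeneous_monomial _ ?_
  rw [fdeg_add, fdeg_single, fdeg_mapDomain_succ, msum_eq_degree]
  have : m.degree ≤ p.totalDegree := by
    rw [← msum_eq_degree]; exact le_totalDegree hm
  omega

lemma aeval_cases_one_homogenize (p : MvPolynomial (Fin n) R) (φ : Fin n → A) :
    aeval (Fin.cases 1 φ) (homogenize p) = aeval φ p := by
  rw [homogenize, map_sum]
  conv_rhs => rw [← support_sum_monomial_coeff p, map_sum]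
  refine Finset.sum_congr rfl fun m hm => ?_
  rw [aeval_monomial, aeval_monomial]
  congr 1
  rw [Finsupp.prod_add_index (by intro a _; simp) (by intro a _ e1 e2; rw [pow_add])]
  rw [Finsupp.prod_single_index (by simp)]
  simp only [Fin.cases_zero, one_pow, one_mul]
  rw [Finsupp.prod_mapDomain_index_inj (Fin.succ_injective _)]
  refine Finsupp.prod_congr fun j _ => ?_
  rw [Fin.cases_succ]

lemma fdeg_fin_succ {s : ℕ} (m : Fin (s + 1) →₀ ℕ) :
    m.degree = m 0 + m.tail.degree := by
  rw [fdeg_eq_sum, fdeg_eq_sum, Fin.sum_univ_succ]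
  simp [Finsupp.tail_apply]

lemma dehom_eq_sum (F : MvPolynomial (Fin (n + 1)) R) :
    aeval (Fin.cases 1 X : Fin (n+1) → MvPolynomial (Fin n) R) F =
      ∑ m ∈ F.support, monomial m.tail (coeff m F) := by
  conv_lhs => rw [← support_sum_monomial_coeff F, map_sum]
  refine Finset.sum_congr rfl fun m _ => ?_
  rw [aeval_monomial, monomial_eq, algebraMap_eq]
  congr 1
  rw [Finsupp.prod_fintype _ _ (fun i => by simp),
    Finsupp.prod_fintype _ _ (fun i => by simp), Fin.prod_univ_succ]
  simp only [Fin.cases_zero, one_pow, one_mul, Fin.cases_succ, Finsupp.tail_apply]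

lemma coeff_dehom {D : ℕ} {F : MvPolynomial (Fin (n + 1)) R}
    (hF : F.IsHomogeneous D) (m : Fin (n + 1) →₀ ℕ) (hm : m.degree = D) :
    coeff m.tail (aeval (Fin.cases 1 X : Fin (n+1) → MvPolynomial (Fin n) R) F)
      = coeff m F := by
  classical
  rw [dehom_eq_sum]
  rw [coeff_sum]
  simp only [coeff_monomial]
  have key : ∀ m' ∈ F.support, (m'.tail = m.tail ↔ m' = m) := by
    intro m' hm'
    constructor
    · intro ht
      have hd' : m'.degree = D := by
        by_contra hdd
        exact (mem_support_iff.mp hm') (hF.coeff_eq_zero hdd)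
      have h0 : m' 0 = m 0 := by
        have e1 := fdeg_fin_succ m
        have e2 := fdeg_fin_succ m'
        rw [ht] at e2
        omega
      ext i
      refine Fin.cases ?_ (fun j => ?_) i
      · exact h0
      · have := congrArg (fun t => t j) ht
        simpa [Finsupp.tail_apply] using this
    · rintro rfl; rfl
  rw [Finset.sum_congr rfl (fun m' hm' => if_congr (key m' hm') rfl rfl)]
  rw [Finset.sum_ite_eq' F.support m (fun b => coeff b F)]
  by_cases hmem : m ∈ F.support
  · rw [if_pos hmem]
  · rw [if_neg hmem]
    exact (notMem_support_iff.mp hmem).symm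

/-- uniqueness: a homogeneous polynomial of degree `D` is determined by its dehomogenization. -/
lemma homog_dehom_inj {D : ℕ} {F G : MvPolynomial (Fin (n + 1)) R}
    (hF : F.IsHomogeneous D) (hG : G.IsHomogeneous D)
    (h : aeval (Fin.cases 1 X : Fin (n+1) → MvPolynomial (Fin n) R) F =
      aeval (Fin.cases 1 X : Fin (n+1) → MvPolynomial (Fin n) R) G) : F = G := by
  ext m
  by_cases hm : m.degree = D
  · rw [← coeff_dehom hF m hm, ← coeff_dehom hG m hm, h]
  · rw [hF.coeff_eq_zero hm, hG.coeff_eq_zero hm]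

end homogenizeLemmas

section part2
variable {R : Type*} [CommRing R] {s : ℕ}

lemma fdeg_smul (k : ℕ) {σ : Type*} [Fintype σ] (m : σ →₀ ℕ) :
    (k • m).degree = k * m.degree := by
  classical
  rw [show (k • m).degree = ∑ i, (k • m) i from ?_, show m.degree = ∑ i, m i from ?_,
    Finset.mul_sum]
  · exact Finset.sum_congr rfl fun i _ => by rw [Finsupp.smul_apply, smul_eq_mul]
  · rw [Finsupp.degree]
    refine Finset.sum_subset (Finset.subset_univ _) (fun x _ hx => ?_)
    rw [Finsupp.mem_support_iff, not_not] at hx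
    exact hx
  · rw [Finsupp.degree]
    refine Finset.sum_subset (Finset.subset_univ _) (fun x _ hx => ?_)
    rw [Finsupp.mem_support_iff, not_not] at hx
    exact hx

lemma aeval_pow_monomial (k : ℕ) (m : Fin s →₀ ℕ) (c : R) :
    aeval (fun j => (X j : MvPolynomial (Fin s) R) ^ k) (monomial m c) =
      monomial (k • m) c := by
  rw [aeval_monomial, monomial_eq, algebraMap_eq]
  congr 1
  rw [Finsupp.prod_of_support_subset (k • m) (Finsupp.support_smul)
      (fun i e => (X i : MvPolynomial (Fin s) R) ^ e) (fun i _ => pow_zero _)]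
  rw [Finsupp.prod]
  refine Finset.prod_congr rfl fun j _ => ?_
  rw [Finsupp.smul_apply, ← pow_mul, smul_eq_mul]

lemma aeval_pow_eq_sum (k : ℕ) (q : MvPolynomial (Fin s) R) :
    aeval (fun j => (X j : MvPolynomial (Fin s) R) ^ k) q =
      ∑ m ∈ q.support, monomial (k • m) (coeff m q) := by
  conv_lhs => rw [← support_sum_monomial_coeff q, map_sum]
  exact Finset.sum_congr rfl fun m _ => aeval_pow_monomial k m (coeff m q)

lemma isHomogeneous_aeval_pow {k D : ℕ} {P : MvPolynomial (Fin s) R}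
    (hP : P.IsHomogeneous D) :
    (aeval (fun j => (X j : MvPolynomial (Fin s) R) ^ k) P).IsHomogeneous (k * D) := by
  rw [aeval_pow_eq_sum, ← mem_homogeneousSubmodule]
  refine Submodule.sum_mem _ fun m hm => ?_
  rw [mem_homogeneousSubmodule]
  refine isHomogeneous_monomial _ ?_
  rw [fdeg_smul]
  have : m.degree = D := by
    by_contra h
    exact (mem_support_iff.mp hm) (hP.coeff_eq_zero h)
  rw [this]

lemma coeff_aeval_pow_smul {k : ℕ} (hk : 0 < k) (q : MvPolynomial (Fin s) R)
    (m : Fin s →₀ ℕ) :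
    coeff (k • m) (aeval (fun j => (X j : MvPolynomial (Fin s) R) ^ k) q) = coeff m q := by
  classical
  rw [aeval_pow_eq_sum, coeff_sum]
  simp only [coeff_monomial]
  have key : ∀ m' : Fin s →₀ ℕ, (k • m' = k • m ↔ m' = m) := by
    intro m'
    constructor
    · intro h
      ext i
      have := congrArg (fun t => t i) h
      simp only [Finsupp.smul_apply, smul_eq_mul] at this
      exact Nat.eq_of_mul_eq_mul_left hk this
    · rintro rfl; rfl
  rw [Finset.sum_congr rfl (fun m' _ => if_congr (key m') rfl rfl)]
  rw [Finset.sum_ite_eq' q.support m (fun b => coeff b q)]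
  by_cases hmem : m ∈ q.support
  · rw [if_pos hmem]
  · rw [if_neg hmem]
    exact (notMem_support_iff.mp hmem).symm

lemma totalDegree_aeval_pow {k : ℕ} (hk : 0 < k) (q : MvPolynomial (Fin s) R) :
    (aeval (fun j => (X j : MvPolynomial (Fin s) R) ^ k) q).totalDegree
      = k * q.totalDegree := by
  rcases eq_or_ne q 0 with rfl | hq
  · simp
  apply le_antisymm
  · rw [aeval_pow_eq_sum]
    refine (totalDegree_finset_sum _ _).trans ?_
    refine Finset.sup_le fun m hm => ?_
    refine (totalDegree_monomial_le _ _).trans ?_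
    have h1 : (k • m).degree = k * m.degree := fdeg_smul k m
    have h2 : m.degree ≤ q.totalDegree := by
      have := le_totalDegree hm
      rwa [show (m.sum fun _ e => e) = m.degree from rfl] at this
    calc (k • m).degree = k * m.degree := h1
      _ ≤ k * q.totalDegree := Nat.mul_le_mul_left k h2
  · obtain ⟨m₀, hm₀, hdeg⟩ := q.support.exists_mem_eq_sup
      (support_nonempty.mpr hq) (fun m => m.sum fun _ e => e)
    have hne : coeff (k • m₀) (aeval (fun j => (X j : MvPolynomial (Fin s) R) ^ k) q) ≠ 0 := by
      rw [coeff_aeval_pow_smul hk]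
      exact mem_support_iff.mp hm₀
    have := le_totalDegree (mem_support_iff.mpr hne)
    have hd : ((k • m₀).sum fun _ e => e) = k * (m₀.sum fun _ e => e) := by
      rw [show ((k • m₀).sum fun _ e => e) = (k • m₀).degree from rfl, fdeg_smul]
      rfl
    rw [hd] at this
    have : k * (m₀.sum fun _ e => e) ≤ _ := this
    calc k * q.totalDegree = k * (m₀.sum fun _ e => e) := by rw [totalDegree, hdeg]
      _ ≤ _ := this

lemma chain_rule_pow {k : ℕ} (hk : 0 < k) (i : Fin s) (P : MvPolynomial (Fin s) R) :
    X i * pderiv i (aeval (fun j => (X j : MvPolynomial (Fin s) R) ^ k) P) =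
      (k : MvPolynomial (Fin s) R) *
        aeval (fun j => (X j : MvPolynomial (Fin s) R) ^ k) (X i * pderiv i P) := by
  induction P using MvPolynomial.induction_on' with
  | add p q hp hq => simp only [map_add, mul_add, hp, hq]
  | monomial m c =>
    rw [aeval_pow_monomial, pderiv_monomial, pderiv_monomial]
    rcases Nat.eq_zero_or_pos (m i) with hmi | hmi
    · have : (k • m) i = 0 := by simp [Finsupp.smul_apply, hmi]
      rw [this, hmi]
      simp
    · have h1 : Finsupp.single i 1 ≤ k • m := by
        rw [Finsupp.single_le_iff, Finsupp.smul_apply, smul_eq_mul]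
        exact Nat.one_le_iff_ne_zero.mpr (by positivity)
      have h2 : Finsupp.single i 1 ≤ m := by
        rw [Finsupp.single_le_iff]; omega
      have hX : ∀ (t : Fin s →₀ ℕ) (d : R),
          (X i : MvPolynomial (Fin s) R) * monomial t d = monomial (t + Finsupp.single i 1) d := by
        intro t d
        rw [show (X i : MvPolynomial (Fin s) R) = X i ^ 1 from (pow_one _).symm,
          X_pow_eq_monomial, monomial_mul, one_mul, add_comm]
      rw [hX, hX, tsub_add_cancel_of_le h1, tsub_add_cancel_of_le h2, aeval_pow_monomial]
      rw [show ((k : MvPolynomial (Fin s) R)) = C ((k : ℕ) : R) by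
        rw [map_natCast C k], C_mul_monomial]
      congr 1
      simp only [Finsupp.smul_apply, smul_eq_mul]
      push_cast
      ring

section part3

/-- index set for monomials of degree `m` in 3 variables -/
def S3 (m : ℕ) : Finset (ℕ × ℕ) :=
  (Finset.range (m+1) ×ˢ Finset.range (m+1)).filter (fun p => p.1 + p.2 ≤ m)

noncomputable def fs3 (m : ℕ) (x : ℕ × ℕ) : Fin 3 →₀ ℕ :=
  Finsupp.single 0 x.1 + Finsupp.single 1 x.2 + Finsupp.single 2 (m - x.1 - x.2)

lemma mem_S3 {m : ℕ} {x : ℕ × ℕ} : x ∈ S3 m ↔ x.1 + x.2 ≤ m := by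
  simp only [S3, Finset.mem_filter, Finset.mem_product, Finset.mem_range]
  omega

lemma fs3_apply0 (m : ℕ) (x : ℕ × ℕ) : fs3 m x 0 = x.1 := by
  simp [fs3, Finsupp.single_apply]
lemma fs3_apply1 (m : ℕ) (x : ℕ × ℕ) : fs3 m x 1 = x.2 := by
  simp [fs3, Finsupp.single_apply]
lemma fs3_apply2 (m : ℕ) (x : ℕ × ℕ) : fs3 m x 2 = m - x.1 - x.2 := by
  simp [fs3, Finsupp.single_apply]

lemma sum3 (q : Fin 3 →₀ ℕ) : q.degree = q 0 + q 1 + q 2 := by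
  rw [Finsupp.degree_apply]
  rw [Finset.sum_subset (Finset.subset_univ _)
    (fun x _ hx => by rw [Finsupp.mem_support_iff, not_not] at hx; exact hx)]
  rw [Fin.sum_univ_three]

lemma fs3_degree {m : ℕ} {x : ℕ × ℕ} (hx : x ∈ S3 m) : (fs3 m x).degree = m := by
  rw [sum3, fs3_apply0, fs3_apply1, fs3_apply2]
  rw [mem_S3] at hx
  omega

lemma fs3_recon {m : ℕ} {q : Fin 3 →₀ ℕ} (hq : q.degree = m) :
    fs3 m (q 0, q 1) = q ∧ (q 0, q 1) ∈ S3 m := by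
  rw [sum3] at hq
  constructor
  · ext i
    fin_cases i <;> simp [fs3, Finsupp.single_apply, Fin.ext_iff] <;> omega
  · rw [mem_S3]; omega

lemma card_S3 (m : ℕ) : 2 * (S3 m).card = (m + 1) * (m + 2) := by
  have : S3 m = (Finset.range (m+1)).biUnion
      (fun i => ({i} : Finset ℕ) ×ˢ Finset.range (m + 1 - i)) := by
    ext ⟨i, j⟩
    simp only [mem_S3, Finset.mem_biUnion, Finset.mem_range, Finset.mem_product,
      Finset.mem_singleton]
    constructor
    · intro h; exact ⟨i, by omega, rfl, by omega⟩
    · rintro ⟨a, ha, rfl, hj⟩; omega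
  rw [this, Finset.card_biUnion]
  · have hcard : ∀ i ∈ Finset.range (m+1),
        (({i} : Finset ℕ) ×ˢ Finset.range (m + 1 - i)).card = m + 1 - i := by
      intro i _
      rw [Finset.card_product, Finset.card_singleton, Finset.card_range, one_mul]
    rw [Finset.sum_congr rfl hcard]
    show 2 * (∑ i ∈ Finset.range (m+1), (m + 1 - i)) = (m + 1) * (m + 2)
    have h1 : ∑ i ∈ Finset.range (m+1), (m + 1 - i) = ∑ i ∈ Finset.range (m+1), (i+1) := by
      rw [← Finset.sum_range_reflect (fun i => i + 1) (m+1)]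
      refine Finset.sum_congr rfl fun j hj => ?_
      rw [Finset.mem_range] at hj; omega
    have h2 : (∑ i ∈ Finset.range (m+1), (i+1)) = ∑ i ∈ Finset.range (m+2), i := by
      rw [Finset.sum_range_succ' (fun i => i) (m+1)]
      simp
    rw [h1, h2]
    have h3 := Finset.sum_range_id_mul_two (m+2)
    rw [show m+2-1 = m+1 from rfl, Nat.mul_comm (m+2) (m+1)] at h3
    omega
  · intro a _ b _ hab
    simp only [Finset.disjoint_left]
    rintro ⟨i, j⟩ hx hy
    simp only [Finset.mem_product, Finset.mem_singleton] at hx hy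
    exact hab (hx.1 ▸ hy.1 ▸ rfl)

noncomputable def theta3 (m : ℕ) :
    (homogeneousSubmodule (Fin 3) ℂ m) →ₗ[ℂ] ({x // x ∈ S3 m} → ℂ) where
  toFun w := fun x => coeff (fs3 m x.1) w.1
  map_add' w v := by ext x; simp [coeff_add]
  map_smul' c w := by ext x; simp [coeff_smul]

lemma theta3_bijective (m : ℕ) : Function.Bijective (theta3 m) := by
  constructor
  · rw [injective_iff_map_eq_zero]
    intro w hw
    ext1
    rw [Submodule.coe_zero]
    ext mm
    rw [coeff_zero]
    by_cases hd : mm.degree = m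
    · obtain ⟨hrec, hmem⟩ := fs3_recon hd
      have := congrFun hw ⟨(mm 0, mm 1), hmem⟩
      simpa [theta3, hrec] using this
    · exact ((mem_homogeneousSubmodule _ _).mp w.2).coeff_eq_zero hd
  · intro f
    classical
    refine ⟨⟨∑ x ∈ (S3 m).attach, monomial (fs3 m x.1) (f x), ?_⟩, ?_⟩
    · refine Submodule.sum_mem _ fun x _ => ?_
      rw [mem_homogeneousSubmodule]
      exact isHomogeneous_monomial _ (fs3_degree x.2)
    · ext y
      simp only [theta3, LinearMap.coe_mk, AddHom.coe_mk]
      rw [coeff_sum]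
      simp only [coeff_monomial]
      have key : ∀ x : {z // z ∈ S3 m}, (fs3 m x.1 = fs3 m y.1 ↔ x = y) := by
        intro x
        constructor
        · intro h
          have h0 := congrArg (fun t => t 0) h
          have h1 := congrArg (fun t => t 1) h
          simp only [fs3_apply0, fs3_apply1] at h0 h1
          exact Subtype.ext (Prod.ext h0 h1)
        · rintro rfl; rfl
      rw [Finset.sum_congr rfl (fun x _ => if_congr (key x) rfl rfl)]
      rw [Finset.sum_ite_eq' (S3 m).attach y f]
      rw [if_pos (Finset.mem_attach _ _)]

lemma finrank_homog3 (m : ℕ) :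
    Module.finrank ℂ (homogeneousSubmodule (Fin 3) ℂ m) = (S3 m).card := by
  classical
  have e := LinearEquiv.ofBijective (theta3 m) (theta3_bijective m)
  rw [e.finrank_eq, Module.finrank_fintype_fun_eq_card, Fintype.card_coe]

instance homog3_finiteDimensional (m : ℕ) :
    FiniteDimensional ℂ (homogeneousSubmodule (Fin 3) ℂ m) := by
  classical
  have e := LinearEquiv.ofBijective (theta3 m) (theta3_bijective m)
  exact Module.Finite.equiv e.symm

end part3

section part4

lemma hc_mul_homog {σ : Type*} {G : MvPolynomial σ ℂ} {a : ℕ} (hG : G.IsHomogeneous a)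
    (u : MvPolynomial σ ℂ) {d : ℕ} (hd : a ≤ d) :
    homogeneousComponent d (u * G) = homogeneousComponent (d - a) u * G := by
  classical
  conv_lhs => rw [← sum_homogeneousComponent u, Finset.sum_mul, map_sum]
  have step : ∀ i ∈ Finset.range (u.totalDegree + 1),
      homogeneousComponent d (homogeneousComponent i u * G)
        = if i = d - a then homogeneousComponent i u * G else 0 := by
    intro i _
    have hmem : homogeneousComponent i u * G ∈ homogeneousSubmodule σ ℂ (i + a) := by
      rw [mem_homogeneousSubmodule]
      exact ((mem_homogeneousSubmodule _ _).mp (homogeneousComponent_mem i u)).mul hG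
    rw [homogeneousComponent_of_mem hmem]
    congr 1
    simp only [eq_iff_iff]
    omega
  rw [Finset.sum_congr rfl step,
    Finset.sum_ite_eq' (Finset.range (u.totalDegree + 1)) (d - a)
      (fun i => homogeneousComponent i u * G)]
  by_cases hin : d - a ∈ Finset.range (u.totalDegree + 1)
  · rw [if_pos hin]
  · rw [if_neg hin]
    rw [Finset.mem_range, not_lt] at hin
    rw [homogeneousComponent_eq_zero _ _ (by omega), zero_mul]

set_option maxHeartbeats 1000000 in
theorem key3 {a b : ℕ} (ha : 0 < a) (hb : 0 < b) {G H : MvPolynomial (Fin 3) ℂ}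
    (hGh : G.IsHomogeneous a) (hHh : H.IsHomogeneous b) (hG0 : G ≠ 0) (hH0 : H ≠ 0) :
    ∃ x : Fin 3 → ℂ, x ≠ 0 ∧ eval x G = 0 ∧ eval x H = 0 := by
  classical
  by_contra hcon
  push_neg at hcon
  have hz : ∀ x : Fin 3 → ℂ, eval x G = 0 → eval x H = 0 → x = 0 := by
    intro x hg hh
    by_contra hx
    exact (hcon x hx hg) hh
  set I : Ideal (MvPolynomial (Fin 3) ℂ) := Ideal.span {G, H} with hI
  have hGI : G ∈ I := Ideal.subset_span (by simp)
  have hHI : H ∈ I := Ideal.subset_span (by simp)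
  have hXrad : ∀ i : Fin 3, X i ∈ I.radical := by
    intro i
    rw [← MvPolynomial.vanishingIdeal_zeroLocus_eq_radical (K := ℂ)]
    rw [MvPolynomial.mem_vanishingIdeal_iff]
    intro x hx
    rw [MvPolynomial.mem_zeroLocus_iff] at hx
    have hx0 : x = 0 := hz x (hx G hGI) (hx H hHI)
    rw [aeval_X, hx0]
    rfl
  have hrad : ∀ i : Fin 3, ∃ N : ℕ, (X i : MvPolynomial (Fin 3) ℂ) ^ N ∈ I := fun i => hXrad i
  choose Nf hNf using hrad
  set N := max (max (Nf 0) (Nf 1)) (max (Nf 2) 1) with hNdef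
  have hN1 : 1 ≤ N := le_max_of_le_right (le_max_right _ _)
  have hXN : ∀ i : Fin 3, (X i : MvPolynomial (Fin 3) ℂ) ^ N ∈ I := by
    intro i
    have hle : Nf i ≤ N := by
      fin_cases i
      · exact le_max_of_le_left (le_max_left _ _)
      · exact le_max_of_le_left (le_max_right _ _)
      · exact le_max_of_le_right (le_max_left _ _)
    have : (X i : MvPolynomial (Fin 3) ℂ) ^ N = X i ^ (N - Nf i) * X i ^ Nf i := by
      rw [← pow_add]; congr 1; omega
    rw [this]
    exact Ideal.mul_mem_left _ _ (hNf i)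
  set d := 3 * N + a + b with hd
  set e := 3 * N with he
  have hmono : ∀ (m : Fin 3 →₀ ℕ) (c : ℂ), m.degree = d → monomial m c ∈ I := by
    intro m c hm
    have hex : ∃ i : Fin 3, N ≤ m i := by
      by_contra hno
      push_neg at hno
      have h0 := hno 0; have h1 := hno 1; have h2 := hno 2
      rw [sum3] at hm
      omega
    obtain ⟨i, hi⟩ := hex
    have : monomial m c = monomial (m - Finsupp.single i N) c * (X i) ^ N := by
      rw [X_pow_eq_monomial, monomial_mul, mul_one,
        tsub_add_cancel_of_le (Finsupp.single_le_iff.mpr hi)]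
    rw [this]
    exact Ideal.mul_mem_left _ _ (hXN i)
  have hhom_in : ∀ w : MvPolynomial (Fin 3) ℂ, w.IsHomogeneous d → w ∈ I := by
    intro w hw
    rw [← support_sum_monomial_coeff w]
    refine Submodule.sum_mem _ fun m hm => ?_
    refine hmono m _ ?_
    by_contra hne
    exact (mem_support_iff.mp hm) (hw.coeff_eq_zero hne)
  have had : a ≤ d := by omega
  have hbd : b ≤ d := by omega
  have hda : d - a = e + b := by omega
  have hdb : d - b = e + a := by omega
  -- the surjection
  let V : ℕ → Submodule ℂ (MvPolynomial (Fin 3) ℂ) := fun m => homogeneousSubmodule (Fin 3) ℂ m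
  have memV : ∀ {m mm : ℕ} (w : MvPolynomial (Fin 3) ℂ), w.IsHomogeneous mm → mm = m → w ∈ V m := by
    rintro m mm w hw rfl
    exact (mem_homogeneousSubmodule _ _).mpr hw
  let Φ : (V (d-a) × V (d-b)) →ₗ[ℂ] V d := {
    toFun := fun uv => ⟨uv.1.1 * G + uv.2.1 * H, by
      refine Submodule.add_mem _ ?_ ?_
      · exact memV _ (((mem_homogeneousSubmodule _ _).mp uv.1.2).mul hGh) (by omega)
      · exact memV _ (((mem_homogeneousSubmodule _ _).mp uv.2.2).mul hHh) (by omega)⟩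
    map_add' := fun x y => by
      ext1
      simp only [Submodule.coe_add, Prod.fst_add, Prod.snd_add]
      ring
    map_smul' := fun c x => by
      ext1
      simp only [Submodule.coe_smul, Prod.smul_fst, Prod.smul_snd, RingHom.id_apply,
        smul_eq_C_mul]
      ring }
  have hΦsurj : Function.Surjective Φ := by
    rintro ⟨w, hw⟩
    obtain ⟨u, v, huv⟩ := Ideal.mem_span_pair.mp (hhom_in w ((mem_homogeneousSubmodule _ _).mp hw))
    refine ⟨(⟨homogeneousComponent (d-a) u, homogeneousComponent_mem _ _⟩,
      ⟨homogeneousComponent (d-b) v, homogeneousComponent_mem _ _⟩), ?_⟩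
    ext1
    show homogeneousComponent (d-a) u * G + homogeneousComponent (d-b) v * H = w
    have := congrArg (homogeneousComponent d) huv
    rw [map_add, hc_mul_homog hGh u had, hc_mul_homog hHh v hbd,
      homogeneousComponent_of_mem hw, if_pos rfl] at this
    exact this
  -- the injection into the kernel
  let Ψ : V e →ₗ[ℂ] (V (d-a) × V (d-b)) := {
    toFun := fun t => (⟨t.1 * H, memV _ (((mem_homogeneousSubmodule _ _).mp t.2).mul hHh) (by omega)⟩,
      ⟨-(t.1 * G), by
        refine Submodule.neg_mem _ ?_
        exact memV _ (((mem_homogeneousSubmodule _ _).mp t.2).mul hGh) (by omega)⟩)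
    map_add' := fun x y => by
      refine Prod.ext ?_ ?_ <;> ext1 <;>
        simp only [Submodule.coe_add, Prod.fst_add, Prod.snd_add] <;> ring
    map_smul' := fun c x => by
      refine Prod.ext ?_ ?_ <;> ext1 <;>
        simp only [Submodule.coe_smul, Prod.smul_fst, Prod.smul_snd, RingHom.id_apply,
          smul_eq_C_mul] <;> ring }
  have hΨinj : Function.Injective Ψ := by
    intro t t' htt
    have h1 : t.1 * H = t'.1 * H := congrArg (fun z => (z.1 : MvPolynomial (Fin 3) ℂ)) htt
    ext1
    exact mul_right_cancel₀ hH0 h1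
  have hΨker : ∀ t, Ψ t ∈ LinearMap.ker Φ := by
    intro t
    rw [LinearMap.mem_ker]
    ext1
    show t.1 * H * G + -(t.1 * G) * H = 0
    ring
  -- dimension count
  have rn := LinearMap.finrank_range_add_finrank_ker Φ
  rw [LinearMap.range_eq_top.mpr hΦsurj, finrank_top, Module.finrank_prod] at rn
  have hker : Module.finrank ℂ (V e) ≤ Module.finrank ℂ (LinearMap.ker Φ) :=
    LinearMap.finrank_le_finrank_of_injective
      (f := Ψ.codRestrict (LinearMap.ker Φ) hΨker)
      (fun t t' h => hΨinj (by
        have h2 := congrArg Subtype.val h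
        simpa using h2))
  have hineq : Module.finrank ℂ (V d) + Module.finrank ℂ (V e)
      ≤ Module.finrank ℂ (V (d-a)) + Module.finrank ℂ (V (d-b)) := by omega
  rw [finrank_homog3, finrank_homog3, finrank_homog3, finrank_homog3] at hineq
  have h2 := Nat.mul_le_mul_left 2 hineq
  rw [Nat.mul_add, Nat.mul_add, card_S3 d, card_S3 e, card_S3 (d-a), card_S3 (d-b)] at h2
  rw [hda, hdb, hd] at h2
  nlinarith [h2, ha, hb, mul_pos ha hb]

end part4
section part5

/-- common nontrivial zero of two positive-degree forms in at least 3 variables over ℂ -/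
lemma key_s {s : ℕ} (hs : 3 ≤ s) {a b : ℕ} (ha : 0 < a) (hb : 0 < b)
    {G H : MvPolynomial (Fin s) ℂ} (hGh : G.IsHomogeneous a) (hHh : H.IsHomogeneous b) :
    ∃ x : Fin s → ℂ, x ≠ 0 ∧ eval x G = 0 ∧ eval x H = 0 := by
  classical
  let f : Fin s → Fin 3 := fun i => if h : (i : ℕ) < 3 then ⟨i, h⟩ else ⟨2, by omega⟩
  have hsec : ∀ j : Fin 3, f (⟨(j : ℕ), lt_of_lt_of_le j.2 hs⟩ : Fin s) = j := by
    intro j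
    simp only [f]
    rw [dif_pos j.2]
  set G3 := rename f G with hG3def
  set H3 := rename f H with hH3def
  have hG3h : G3.IsHomogeneous a := hGh.rename_isHomogeneous
  have hH3h : H3.IsHomogeneous b := hHh.rename_isHomogeneous
  have lift : ∀ w : Fin 3 → ℂ, w ≠ 0 → eval w G3 = 0 → eval w H3 = 0 →
      ∃ x : Fin s → ℂ, x ≠ 0 ∧ eval x G = 0 ∧ eval x H = 0 := by
    intro w hw hwg hwh
    refine ⟨w ∘ f, ?_, ?_, ?_⟩
    · obtain ⟨j, hj⟩ := Function.ne_iff.mp hw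
      intro hx
      apply hj
      have := congrFun hx (⟨(j : ℕ), lt_of_lt_of_le j.2 hs⟩ : Fin s)
      rwa [Function.comp_apply, hsec j] at this
    · rw [← eval_rename, ← hG3def, hwg]
    · rw [← eval_rename, ← hH3def, hwh]
  by_cases hG30 : G3 = 0
  · by_cases hH30 : H3 = 0
    · refine lift (fun _ => 1) ?_ (by rw [hG30, map_zero]) (by rw [hH30, map_zero])
      intro h
      have := congrFun h 0
      simp at this
    · obtain ⟨w, hw, hwh, _⟩ := key3 hb hb hH3h hH3h hH30 hH30
      exact lift w hw (by rw [hG30, map_zero]) hwh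
  · by_cases hH30 : H3 = 0
    · obtain ⟨w, hw, hwg, _⟩ := key3 ha ha hG3h hG3h hG30 hG30
      exact lift w hw hwg (by rw [hH30, map_zero])
    · obtain ⟨w, hw, hwg, hwh⟩ := key3 ha hb hG3h hH3h hG30 hH30
      exact lift w hw hwg hwh

variable {R : Type*} [CommRing R]

lemma hc_totalDegree_ne_zero {σ : Type*} {q : MvPolynomial σ R} (hq : q ≠ 0) :
    homogeneousComponent q.totalDegree q ≠ 0 := by
  obtain ⟨m₀, hm₀, hdeg⟩ := q.support.exists_mem_eq_sup
    (support_nonempty.mpr hq) (fun m => m.sum fun _ e => e)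
  have hdeg' : m₀.degree = q.totalDegree := by
    rw [totalDegree, hdeg]; rfl
  intro h0
  have := coeff_homogeneousComponent (φ := q) (n := q.totalDegree) m₀
  rw [h0, coeff_zero, if_pos hdeg'] at this
  exact (mem_support_iff.mp hm₀) this.symm

lemma totalDegree_mul_eq' [IsDomain R] {σ : Type*} {f g : MvPolynomial σ R}
    (hf : f ≠ 0) (hg : g ≠ 0) :
    (f * g).totalDegree = f.totalDegree + g.totalDegree := by
  classical
  set df := f.totalDegree
  set dg := g.totalDegree
  refine le_antisymm (totalDegree_mul f g) ?_
  have hcc : homogeneousComponent (df + dg) (f * g) =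
      homogeneousComponent df f * homogeneousComponent dg g := by
    conv_lhs => rw [← sum_homogeneousComponent f, ← sum_homogeneousComponent g,
      Finset.sum_mul_sum]
    rw [← Finset.sum_product', map_sum]
    have step : ∀ x ∈ (Finset.range (df + 1)) ×ˢ (Finset.range (dg + 1)),
        homogeneousComponent (df + dg) (homogeneousComponent x.1 f * homogeneousComponent x.2 g)
          = if x = (df, dg) then homogeneousComponent df f * homogeneousComponent dg g
            else 0 := by
      rintro ⟨i, j⟩ hx
      simp only [Finset.mem_product, Finset.mem_range] at hx
      have hmem : homogeneousComponent i f * homogeneousComponent j g ∈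
          homogeneousSubmodule σ R (i + j) := by
        rw [mem_homogeneousSubmodule]
        exact ((mem_homogeneousSubmodule _ _).mp (homogeneousComponent_mem i f)).mul
          ((mem_homogeneousSubmodule _ _).mp (homogeneousComponent_mem j g))
      rw [homogeneousComponent_of_mem hmem]
      by_cases hij : (i, j) = (df, dg)
      · rw [Prod.mk.injEq] at hij
        obtain ⟨rfl, rfl⟩ := hij
        rw [if_pos rfl, if_pos rfl]
      · rw [if_neg hij, if_neg]
        rw [Prod.mk.injEq] at hij
        intro he
        apply hij
        constructor <;> omega
    rw [Finset.sum_congr rfl step, Finset.sum_ite_eq' _ (df, dg)]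
    rw [if_pos]
    simp only [Finset.mem_product, Finset.mem_range]
    omega
  have hne : homogeneousComponent (df + dg) (f * g) ≠ 0 := by
    rw [hcc]
    exact mul_ne_zero (hc_totalDegree_ne_zero hf) (hc_totalDegree_ne_zero hg)
  by_contra hlt
  push_neg at hlt
  exact hne (homogeneousComponent_eq_zero _ _ hlt)

lemma totalDegree_map_int {σ : Type*} (f : MvPolynomial σ ℤ) :
    (MvPolynomial.map (Int.castRingHom ℂ) f).totalDegree = f.totalDegree := by
  rw [totalDegree, totalDegree, support_map_of_injective _ (fun a b h => by
    have : ((a : ℤ) : ℂ) = ((b : ℤ) : ℂ) := h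
    exact_mod_cast this)]

end part5

/-- Let `p ∈ ℤ[x₁,…,xₙ]` with `n ≥ 2` and let `P ∈ ℂ[z₀,…,zₙ]` be its
homogenization viewed over `ℂ`.  If the system `zᵢ · ∂P/∂zᵢ = 0` (`i = 0,…,n`) has only
the trivial solution over `ℂ`, then for every positive integer `k`, the polynomial
`p(x₁^k,…,xₙ^k)` is not a product of two non-constant polynomials in `ℤ[x₁,…,xₙ]`. -/
theorem stmt18 {n : ℕ} (hn : 2 ≤ n) (p : MvPolynomial (Fin n) ℤ)
    (heuler : ∀ x : Fin (n + 1) → ℂ,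
      (∀ i, x i * eval x (pderiv i (homogenize
        (MvPolynomial.map (Int.castRingHom ℂ) p))) = 0) → x = 0) :
    ∀ k : ℕ, 0 < k →
      ¬ ∃ f g : MvPolynomial (Fin n) ℤ,
        aeval (fun i => (X i : MvPolynomial (Fin n) ℤ) ^ k) p = f * g ∧
          0 < f.totalDegree ∧ 0 < g.totalDegree := by
  intro k hk
  rintro ⟨f, g, hfg, hfdeg, hgdeg⟩
  classical
  have hinj : Function.Injective (Int.castRingHom ℂ) := fun a b h => by
    have : ((a : ℤ) : ℂ) = ((b : ℤ) : ℂ) := h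
    exact_mod_cast this
  set pC := MvPolynomial.map (Int.castRingHom ℂ) p with hpC
  set fC := MvPolynomial.map (Int.castRingHom ℂ) f with hfC
  set gC := MvPolynomial.map (Int.castRingHom ℂ) g with hgC
  have hf0 : f ≠ 0 := by rintro rfl; simp at hfdeg
  have hg0 : g ≠ 0 := by rintro rfl; simp at hgdeg
  have hfC0 : fC ≠ 0 := fun h => hf0 (MvPolynomial.map_injective _ hinj (by rw [← hfC, h, map_zero]))
  have hgC0 : gC ≠ 0 := fun h => hg0 (MvPolynomial.map_injective _ hinj (by rw [← hgC, h, map_zero]))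
  have hfCdeg : 0 < fC.totalDegree := by rw [hfC, totalDegree_map_int]; exact hfdeg
  have hgCdeg : 0 < gC.totalDegree := by rw [hgC, totalDegree_map_int]; exact hgdeg
  -- mapped equation
  have hQC : aeval (fun i => (X i : MvPolynomial (Fin n) ℂ) ^ k) pC = fC * gC := by
    have := congrArg (MvPolynomial.map (Int.castRingHom ℂ)) hfg
    rw [map_mul] at this
    rw [← this]
    rw [aeval_pow_eq_sum, aeval_pow_eq_sum, map_sum,
      support_map_of_injective _ hinj]
    refine Finset.sum_congr rfl fun m _ => ?_
    rw [map_monomial, coeff_map]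
  set QC := aeval (fun i => (X i : MvPolynomial (Fin n) ℂ) ^ k) pC with hQCdef
  set P := homogenize pC with hP
  set F := homogenize QC with hF
  set GG := homogenize fC with hGG
  set HH := homogenize gC with hHH
  have hdehomF : aeval (Fin.cases 1 X : Fin (n+1) → MvPolynomial (Fin n) ℂ) F = QC := by
    rw [hF, aeval_cases_one_homogenize, aeval_X_left_apply]
  have hdehomGG : aeval (Fin.cases 1 X : Fin (n+1) → MvPolynomial (Fin n) ℂ) GG = fC := by
    rw [hGG, aeval_cases_one_homogenize, aeval_X_left_apply]
  have hdehomHH : aeval (Fin.cases 1 X : Fin (n+1) → MvPolynomial (Fin n) ℂ) HH = gC := by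
    rw [hHH, aeval_cases_one_homogenize, aeval_X_left_apply]
  have hGG0 : GG ≠ 0 := fun h => hfC0 (by rw [← hdehomGG, h, map_zero])
  have hHH0 : HH ≠ 0 := fun h => hgC0 (by rw [← hdehomHH, h, map_zero])
  have hQCdeg : QC.totalDegree = fC.totalDegree + gC.totalDegree := by
    rw [hQC]
    exact totalDegree_mul_eq' hfC0 hgC0
  -- F = GG * HH
  have hFGH : F = GG * HH := by
    refine homog_dehom_inj (D := QC.totalDegree) (homogenize_isHomogeneous QC) ?_ ?_
    · rw [hQCdeg]
      exact (homogenize_isHomogeneous fC).mul (homogenize_isHomogeneous gC)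
    · rw [hdehomF, map_mul, hdehomGG, hdehomHH, hQC]
  -- F = P(z^k)
  have hFP : F = aeval (fun j => (X j : MvPolynomial (Fin (n+1)) ℂ) ^ k) P := by
    have hQCdeg2 : QC.totalDegree = k * pC.totalDegree := totalDegree_aeval_pow hk pC
    refine homog_dehom_inj (D := k * pC.totalDegree)
      (hQCdeg2 ▸ homogenize_isHomogeneous QC)
      (isHomogeneous_aeval_pow (homogenize_isHomogeneous pC)) ?_
    rw [hdehomF]
    rw [aeval_eq_bind₁ (fun j => (X j : MvPolynomial (Fin (n+1)) ℂ) ^ k), aeval_bind₁]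
    have hfn : (fun i => aeval (Fin.cases 1 X : Fin (n+1) → MvPolynomial (Fin n) ℂ)
        ((X i : MvPolynomial (Fin (n+1)) ℂ) ^ k)) =
        (Fin.cases 1 (fun j => (X j : MvPolynomial (Fin n) ℂ) ^ k)) := by
      funext i
      rw [map_pow, aeval_X]
      refine Fin.cases ?_ (fun j => ?_) i
      · rw [Fin.cases_zero, Fin.cases_zero, one_pow]
      · rw [Fin.cases_succ, Fin.cases_succ]
    rw [hfn, hP, aeval_cases_one_homogenize]
  -- common zero of GG and HH
  obtain ⟨a, ha0, haG, haH⟩ := key_s (by omega) hfCdeg hgCdeg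
    ((mem_homogeneousSubmodule _ _).mp
      ((mem_homogeneousSubmodule _ _).mpr (homogenize_isHomogeneous fC)))
    (homogenize_isHomogeneous gC)
  set x : Fin (n+1) → ℂ := fun i => a i ^ k with hx
  have hxne : x ≠ 0 := by
    obtain ⟨j, hj⟩ := Function.ne_iff.mp ha0
    intro h
    exact pow_ne_zero k hj (congrFun h j)
  refine hxne (heuler x ?_)
  intro i
  have hchain := chain_rule_pow (R := ℂ) hk i P
  rw [← hFP] at hchain
  have heval := congrArg (eval a) hchain
  have hevF : eval a (pderiv i F) = 0 := by
    rw [hFGH, pderiv_mul]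
    rw [map_add, map_mul, map_mul, haG, haH]
    ring
  rw [map_mul, eval_X, hevF, mul_zero] at heval
  -- RHS
  have hcomp : ∀ ψ : MvPolynomial (Fin (n+1)) ℂ,
      eval a (aeval (fun j => (X j : MvPolynomial (Fin (n+1)) ℂ) ^ k) ψ) = eval x ψ := by
    intro ψ
    have h1 : eval a (aeval (fun j => (X j : MvPolynomial (Fin (n+1)) ℂ) ^ k) ψ)
        = aeval a (bind₁ (fun j => (X j : MvPolynomial (Fin (n+1)) ℂ) ^ k) ψ) := by
      rw [← aeval_eq_bind₁]
      rfl
    rw [h1, aeval_bind₁]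
    have : (fun i => aeval a ((X i : MvPolynomial (Fin (n+1)) ℂ) ^ k)) = x := by
      funext i
      rw [map_pow, aeval_X, hx]
    rw [this]
    rfl
  rw [map_mul, hcomp, map_mul, eval_X] at heval
  have hkC : (eval a) (k : MvPolynomial (Fin (n+1)) ℂ) = (k : ℂ) := by
    rw [map_natCast]
  rw [hkC] at heval
  have hkne : (k : ℂ) ≠ 0 := Nat.cast_ne_zero.mpr (by omega)
  have := heval.symm
  rcases mul_eq_zero.mp this with h | h
  · exact absurd h hkne
  · exact h
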